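/- A pseudo effect algebra E is weakly commutative (x+y defined iff y+x defined) if and only if E is symmetric (a⁻ = a∼ for all a ∈ E). -/

import Mathlib

open scoped Classical

/-- A generalized pseudo effect algebra (GPEA): a partial algebra `(E; +, 0)`
satisfying (GP1)-(GP5). The partial addition is modelled by an `Option`-valued
operation: `add a b = some c` means `a + b` is defined and equals `c`. -/
structure GPEA (E : Type) where
  add : E → E → Option E
  zero : E
  assoc_ex : ∀ a b c : E,
    (∃ ab, add a b = some ab ∧ (add ab c).isSome) ↔
    (∃ bc, add b c = some bc ∧ (add a bc).isSome)
  assoc_eq : ∀ a b c ab bc : E, add a b = some ab → add b c = some bc →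
    add ab c = add a bc
  exch : ∀ a b ab : E, add a b = some ab →
    (∃ d, add d a = some ab) ∧ (∃ e, add b e = some ab)
  cancel_left : ∀ a b c x : E, add a b = some x → add a c = some x → b = c
  cancel_right : ∀ a b c x : E, add b a = some x → add c a = some x → b = c
  pos : ∀ a b : E, add a b = some zero → a = zero ∧ b = zero
  add_zero : ∀ a : E, add a zero = some a
  zero_add : ∀ a : E, add zero a = some a

/-- The induced order of a GPEA: `a ≤ b` iff `∃ c, a + c = b`. -/
def GPEA.le {E : Type} (G : GPEA E) (a b : E) : Prop := ∃ c, G.add a c = some b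

/-- `b ⊖ a` : the element `c` with `c + a = b` (if it exists, else `0`). -/
noncomputable def GPEA.lsub {E : Type} (G : GPEA E) (b a : E) : E :=
  if h : ∃ c, G.add c a = some b then h.choose else G.zero

/-- `a ⊘ b` : the element `c` with `a + c = b` (if it exists, else `0`). -/
noncomputable def GPEA.rsub {E : Type} (G : GPEA E) (a b : E) : E :=
  if h : ∃ c, G.add a c = some b then h.choose else G.zero

/-- A GPEA is directed if any two elements have a common upper bound. -/
def GPEA.directed {E : Type} (G : GPEA E) : Prop :=
  ∀ a b : E, ∃ c, G.le a c ∧ G.le b c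

/-- A pseudo effect algebra (PEA): a partial algebra `(E; +, 0, 1)`
satisfying axioms (i)-(iv). -/
structure PEA (E : Type) where
  add : E → E → Option E
  zero : E
  one : E
  assoc_ex : ∀ a b c : E,
    (∃ ab, add a b = some ab ∧ (add ab c).isSome) ↔
    (∃ bc, add b c = some bc ∧ (add a bc).isSome)
  assoc_eq : ∀ a b c ab bc : E, add a b = some ab → add b c = some bc →
    add ab c = add a bc
  compl_right : ∀ a : E, ∃! d, add a d = some one
  compl_left : ∀ a : E, ∃! e, add e a = some one
  exch : ∀ a b ab : E, add a b = some ab →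
    (∃ d, add d a = some ab) ∧ (∃ e, add b e = some ab)
  one_left : ∀ a : E, (add one a).isSome → a = zero
  one_right : ∀ a : E, (add a one).isSome → a = zero

/-- The induced order of a PEA. -/
def PEA.le {E : Type} (P : PEA E) (a b : E) : Prop := ∃ c, P.add a c = some b

/-- `a⁻` : the unique element with `a⁻ + a = 1`. -/
noncomputable def PEA.negL {E : Type} (P : PEA E) (a : E) : E :=
  (P.compl_left a).choose

/-- `a∼` : the unique element with `a + a∼ = 1`. -/
noncomputable def PEA.negR {E : Type} (P : PEA E) (a : E) : E :=
  (P.compl_right a).choose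

/-- `E` is `λ,ρ`-weakly commutative. -/
def GPEA.lrWC {E I : Type} (G : GPEA E) (l r : I ≃ I) : Prop :=
  (∀ f a : I → E, ∀ i : I,
    ((G.add (f (r.symm i)) (a i)).isSome ↔ (G.add (a i) (f (l.symm i))).isSome)) ∧
  (∀ g b : I → E, ∀ i : I,
    ((G.add (g (l.symm i)) (b i)).isSome ↔ (G.add (b i) (g (r.symm i))).isSome))

/-- The partial addition of the kite `K_I^{λ,ρ}(E)`: the carrier is
`(I → E) ⊕ (I → E)`, `Sum.inl` being the lower copy `E^I` and `Sum.inr` the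
upper copy `(Ē)^I`; rules (I)-(IV). -/
noncomputable def kiteAdd {E I : Type} (G : GPEA E) (l r : I ≃ I) :
    (I → E) ⊕ (I → E) → (I → E) ⊕ (I → E) → Option ((I → E) ⊕ (I → E))
  | Sum.inr _, Sum.inr _ => none
  | Sum.inr a, Sum.inl f =>
      if _ : ∀ i, G.le (f (r.symm i)) (a i) then
        some (Sum.inr fun i => G.rsub (f (r.symm i)) (a i))
      else none
  | Sum.inl f, Sum.inr a =>
      if _ : ∀ i, G.le (f (l.symm i)) (a i) then
        some (Sum.inr fun i => G.lsub (a i) (f (l.symm i)))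
      else none
  | Sum.inl f, Sum.inl g =>
      if h : ∀ j, (G.add (f j) (g j)).isSome then
        some (Sum.inl fun j => (G.add (f j) (g j)).get (h j))
      else none

/-- The bottom element `0 = ⟨0_j⟩` of the kite. -/
def kiteZero (E I : Type) (G : GPEA E) : (I → E) ⊕ (I → E) :=
  Sum.inl fun _ => G.zero

/-- The top element `1 = ⟨0̄_i⟩` of the kite. -/
def kiteOne (E I : Type) (G : GPEA E) : (I → E) ⊕ (I → E) :=
  Sum.inr fun _ => G.zero

/-- Riesz decomposition property RDP for a GPEA. -/
def GPEA.RDP {E : Type} (G : GPEA E) : Prop :=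
  ∀ a1 a2 b1 b2 x : E, G.add a1 a2 = some x → G.add b1 b2 = some x →
    ∃ c11 c12 c21 c22 : E, G.add c11 c12 = some a1 ∧ G.add c21 c22 = some a2 ∧
      G.add c11 c21 = some b1 ∧ G.add c12 c22 = some b2

/-- RDP₁ for a GPEA. -/
def GPEA.RDP1 {E : Type} (G : GPEA E) : Prop :=
  ∀ a1 a2 b1 b2 x : E, G.add a1 a2 = some x → G.add b1 b2 = some x →
    ∃ c11 c12 c21 c22 : E, G.add c11 c12 = some a1 ∧ G.add c21 c22 = some a2 ∧
      G.add c11 c21 = some b1 ∧ G.add c12 c22 = some b2 ∧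
      (∀ u v : E, G.le u c12 → G.le v c21 → G.add u v = G.add v u)

/-- RDP₂ for a GPEA (`c₁₂ ∧ c₂₁ = 0`). -/
def GPEA.RDP2 {E : Type} (G : GPEA E) : Prop :=
  ∀ a1 a2 b1 b2 x : E, G.add a1 a2 = some x → G.add b1 b2 = some x →
    ∃ c11 c12 c21 c22 : E, G.add c11 c12 = some a1 ∧ G.add c21 c22 = some a2 ∧
      G.add c11 c21 = some b1 ∧ G.add c12 c22 = some b2 ∧
      (∀ z : E, G.le z c12 → G.le z c21 → z = G.zero)

/-- RDP₀ for a GPEA. -/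
def GPEA.RDP0 {E : Type} (G : GPEA E) : Prop :=
  ∀ a b c x : E, G.add b c = some x → G.le a x →
    ∃ b1 c1 : E, G.le b1 b ∧ G.le c1 c ∧ G.add b1 c1 = some a

/-- RDP for a PEA. -/
def PEA.RDP {E : Type} (P : PEA E) : Prop :=
  ∀ a1 a2 b1 b2 x : E, P.add a1 a2 = some x → P.add b1 b2 = some x →
    ∃ c11 c12 c21 c22 : E, P.add c11 c12 = some a1 ∧ P.add c21 c22 = some a2 ∧
      P.add c11 c21 = some b1 ∧ P.add c12 c22 = some b2

/-- RDP₁ for a PEA. -/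
def PEA.RDP1 {E : Type} (P : PEA E) : Prop :=
  ∀ a1 a2 b1 b2 x : E, P.add a1 a2 = some x → P.add b1 b2 = some x →
    ∃ c11 c12 c21 c22 : E, P.add c11 c12 = some a1 ∧ P.add c21 c22 = some a2 ∧
      P.add c11 c21 = some b1 ∧ P.add c12 c22 = some b2 ∧
      (∀ u v : E, P.le u c12 → P.le v c21 → P.add u v = P.add v u)

/-- RDP₂ for a PEA. -/
def PEA.RDP2 {E : Type} (P : PEA E) : Prop :=
  ∀ a1 a2 b1 b2 x : E, P.add a1 a2 = some x → P.add b1 b2 = some x →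
    ∃ c11 c12 c21 c22 : E, P.add c11 c12 = some a1 ∧ P.add c21 c22 = some a2 ∧
      P.add c11 c21 = some b1 ∧ P.add c12 c22 = some b2 ∧
      (∀ z : E, P.le z c12 → P.le z c21 → z = P.zero)

/-- RDP₀ for a PEA. -/
def PEA.RDP0 {E : Type} (P : PEA E) : Prop :=
  ∀ a b c x : E, P.add b c = some x → P.le a x →
    ∃ b1 c1 : E, P.le b1 b ∧ P.le c1 c ∧ P.add b1 c1 = some a

/-- Ideal of a GPEA. -/
def GPEA.isIdeal {E : Type} (G : GPEA E) (A : Set E) : Prop :=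
  G.zero ∈ A ∧ (∀ x y z : E, x ∈ A → y ∈ A → G.add x y = some z → z ∈ A) ∧
  (∀ x y : E, G.le x y → y ∈ A → x ∈ A)

/-- Normal ideal of a GPEA: `x + A = A + x` for all `x`. -/
def GPEA.isNormalIdeal {E : Type} (G : GPEA E) (A : Set E) : Prop :=
  G.isIdeal A ∧
  ∀ x : E, {z | ∃ y ∈ A, G.add x y = some z} = {z | ∃ y ∈ A, G.add y x = some z}

/-- Ideal of a PEA. -/
def PEA.isIdeal {E : Type} (P : PEA E) (A : Set E) : Prop :=
  P.zero ∈ A ∧ (∀ x y z : E, x ∈ A → y ∈ A → P.add x y = some z → z ∈ A) ∧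
  (∀ x y : E, P.le x y → y ∈ A → x ∈ A)

/-- Normal ideal of a PEA. -/
def PEA.isNormalIdeal {E : Type} (P : PEA E) (A : Set E) : Prop :=
  P.isIdeal A ∧
  ∀ x : E, {z | ∃ y ∈ A, P.add x y = some z} = {z | ∃ y ∈ A, P.add y x = some z}

/-- Maximal ideal of a PEA: proper and not properly contained in any proper ideal. -/
def PEA.isMaximalIdeal {E : Type} (P : PEA E) (A : Set E) : Prop :=
  P.isIdeal A ∧ A ≠ Set.univ ∧
  ∀ B : Set E, P.isIdeal B → A ⊆ B → B = A ∨ B = Set.univ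

/-- `i` and `j` are connected: `(ρ∘λ⁻¹)^m(i) = j` or `(λ∘ρ⁻¹)^m(i) = j` for some `m ≥ 0`. -/
def connected {I : Type} (l r : I ≃ I) (i j : I) : Prop :=
  ∃ m : ℕ, (fun x => r (l.symm x))^[m] i = j ∨ (fun x => l (r.symm x))^[m] i = j

namespace PEA

variable {E : Type} (P : PEA E)

lemma negL_spec (a : E) : P.add (P.negL a) a = some P.one :=
  (P.compl_left a).choose_spec.1

lemma negL_unique {a e : E} (h : P.add e a = some P.one) : e = P.negL a :=
  (P.compl_left a).choose_spec.2 e h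

lemma negR_spec (a : E) : P.add a (P.negR a) = some P.one :=
  (P.compl_right a).choose_spec.1

lemma negR_unique {a d : E} (h : P.add a d = some P.one) : d = P.negR a :=
  (P.compl_right a).choose_spec.2 d h

lemma add_one_zero : P.add P.one P.zero = some P.one := by
  have h := P.negR_spec P.one
  have hz : P.negR P.one = P.zero := P.one_left _ (by simp [h])
  rwa [hz] at h

lemma add_zero_one : P.add P.zero P.one = some P.one := by
  have h := P.negL_spec P.one
  have hz : P.negL P.one = P.zero := P.one_right _ (by simp [h])
  rwa [hz] at h

lemma add_zero' (a : E) : P.add a P.zero = some a := by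
  obtain ⟨bc, hbc, _⟩ := (P.assoc_ex (P.negL a) a P.zero).mp
    ⟨P.one, P.negL_spec a, by simp [P.add_one_zero]⟩
  have he := P.assoc_eq (P.negL a) a P.zero P.one bc (P.negL_spec a) hbc
  rw [P.add_one_zero] at he
  have h1 : bc = P.negR (P.negL a) := P.negR_unique he.symm
  have h2 : a = P.negR (P.negL a) := P.negR_unique (P.negL_spec a)
  rw [hbc, h1, ← h2]

lemma pos' {x y : E} (h : P.add x y = some P.zero) :
    x = P.zero ∧ y = P.zero := by
  obtain ⟨bc, hbc, _⟩ := (P.assoc_ex x y P.one).mp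
    ⟨P.zero, h, by simp [P.add_zero_one]⟩
  have hy : y = P.zero := P.one_right y (by simp [hbc])
  subst hy
  have hx := P.add_zero' x
  rw [h] at hx
  exact ⟨(Option.some_inj.mp hx).symm, rfl⟩

lemma cancel_left' {a b c x : E} (hb : P.add a b = some x)
    (hc : P.add a c = some x) : b = c := by
  -- b + x∼ = a∼ and c + x∼ = a∼
  have key : ∀ y : E, P.add a y = some x → P.add y (P.negR x) = some (P.negR a) := by
    intro y hy
    obtain ⟨m, hm, _⟩ := (P.assoc_ex a y (P.negR x)).mp
      ⟨x, hy, by simp [P.negR_spec x]⟩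
    have he := P.assoc_eq a y (P.negR x) x m hy hm
    rw [P.negR_spec x] at he
    rw [hm, P.negR_unique he.symm]
  have hbm := key b hb
  have hcm := key c hc
  -- n := x∼ + (a∼)∼ ; then b + n = 1 = c + n
  have key2 : ∀ y : E, P.add y (P.negR x) = some (P.negR a) →
      ∀ n : E, P.add (P.negR x) (P.negR (P.negR a)) = some n →
      P.add y n = some P.one := by
    intro y hy n hn
    have he := P.assoc_eq y (P.negR x) (P.negR (P.negR a)) (P.negR a) n hy hn
    rw [P.negR_spec (P.negR a)] at he
    exact he.symm
  obtain ⟨n, hn, _⟩ := (P.assoc_ex b (P.negR x) (P.negR (P.negR a))).mp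
    ⟨P.negR a, hbm, by simp [P.negR_spec (P.negR a)]⟩
  have h1 := key2 b hbm n hn
  have h2 := key2 c hcm n hn
  rw [P.negL_unique h1, P.negL_unique h2]

end PEA

/-- A pseudo effect algebra is weakly commutative (`x + y` defined
iff `y + x` defined) iff it is symmetric (`a⁻ = a∼` for all `a`). -/
theorem pea_weaklyCommutative_iff_symmetric {E : Type} (P : PEA E) :
    (∀ x y : E, (P.add x y).isSome ↔ (P.add y x).isSome) ↔
    (∀ a : E, P.negL a = P.negR a) := by
  constructor
  · intro wc a
    set nL := P.negL a with hnL
    set nR := P.negR a with hnR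
    -- c := a + a⁻ is defined by weak commutativity
    obtain ⟨c, hc⟩ := Option.isSome_iff_exists.mp
      ((wc nL a).mp (by simp [hnL, P.negL_spec a]))
    -- Step A : a⁻ + c∼ = a∼
    obtain ⟨t, ht, _⟩ := (P.assoc_ex a nL (P.negR c)).mp
      ⟨c, hc, by simp [P.negR_spec c]⟩
    have hA : P.add nL (P.negR c) = some nR := by
      have he := P.assoc_eq a nL (P.negR c) c t hc ht
      rw [P.negR_spec c] at he
      rw [ht, hnR, P.negR_unique he.symm]
    -- d := a∼ + a is defined by weak commutativity
    obtain ⟨d, hd⟩ := Option.isSome_iff_exists.mp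
      ((wc a nR).mp (by simp [hnR, P.negR_spec a]))
    -- Step B : d⁻ + a∼ = a⁻
    obtain ⟨u, hu, _⟩ := (P.assoc_ex (P.negL d) nR a).mpr
      ⟨d, hd, by simp [P.negL_spec d]⟩
    have hB : P.add (P.negL d) nR = some nL := by
      have he := P.assoc_eq (P.negL d) nR a u d hu hd
      rw [P.negL_spec d] at he
      rw [hu, hnL, P.negL_unique he]
    obtain ⟨_, e, he⟩ := P.exch (P.negL d) nR nL hB
    -- Step C : a⁻ + (c∼ + e) = a⁻, hence c∼ + e = 0, hence c∼ = 0
    obtain ⟨w, hw, _⟩ := (P.assoc_ex nL (P.negR c) e).mp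
      ⟨nR, hA, by simp [he]⟩
    have hnlw : P.add nL w = some nL := by
      have h1 := P.assoc_eq nL (P.negR c) e nR w hA hw
      rw [← h1, he]
    have hw0 : w = P.zero := P.cancel_left' hnlw (P.add_zero' nL)
    have hc0 : P.negR c = P.zero := (P.pos' (hw0 ▸ hw)).1
    rw [hc0, P.add_zero' nL] at hA
    exact Option.some_inj.mp hA
  · intro sym x y
    suffices h : ∀ u v : E, (P.add u v).isSome → (P.add v u).isSome from
      ⟨h x y, h y x⟩
    intro u v huv
    obtain ⟨c, hc⟩ := Option.isSome_iff_exists.mp huv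
    obtain ⟨bc, hbc, _⟩ := (P.assoc_ex u v (P.negR c)).mp
      ⟨c, hc, by simp [P.negR_spec c]⟩
    have hone : P.add u bc = some P.one := by
      have he := P.assoc_eq u v (P.negR c) c bc hc hbc
      rw [P.negR_spec c] at he
      exact he.symm
    have hbcval : bc = P.negL u := by rw [P.negR_unique hone, ← sym u]
    have hbc' : P.add v (P.negR c) = some (P.negL u) := by rw [hbc, hbcval]
    obtain ⟨⟨s, hs⟩, _⟩ := P.exch v (P.negR c) (P.negL u) hbc'
    obtain ⟨vu, hvu, _⟩ := (P.assoc_ex s v u).mp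
      ⟨P.negL u, hs, by simp [P.negL_spec u]⟩
    simp [hvu]
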